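/- Let ℳ be a model category in which every object is fibrant, equipped with a cofibrant and weakly contractible functor F : 𝔾 → ℳ. Then the globular extension (ℳ, F) is contractible: every admissible pair (f, g) : D_n → X (globularly parallel morphisms into a globular sum X of dimension ≤ n+1) admits a lifting h : D_{n+1} → X with hσ_{n+1} = f and hτ_{n+1} = g. -/

import Mathlib

/-!
STATEMENT 13: Let `ℳ` be a model category in which every object is fibrant,
equipped with a cofibrant and weakly contractible functor `F : 𝔾 → ℳ`.  Then the
globular extension `(ℳ, F)` is contractible: every admissible pair
`(f, g) : D_n → X` (globularly parallel morphisms into a globular sum `X` of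
dimension `≤ n + 1`) admits a lifting `h : D_{n+1} → X` with `h ∘ σ_{n+1} = f` and
`h ∘ τ_{n+1} = g`.
-/

open CategoryTheory Opposite

universe w v u

/-- A coglobular object: a category under the globe category 𝔾. -/
structure Coglob (E : Type u) [Category.{v} E] where
  D : ℕ → E
  σ : ∀ n, D n ⟶ D (n + 1)
  τ : ∀ n, D n ⟶ D (n + 1)
  relσ : ∀ n, σ n ≫ σ (n + 1) = σ n ≫ τ (n + 1)
  relτ : ∀ n, τ n ≫ σ (n + 1) = τ n ≫ τ (n + 1)

namespace Coglob

variable {E : Type u} [Category.{v} E] (Φ : Coglob E)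

/-- Iterated cosource `σ^{j+k}_j : D j ⟶ D (j+k)`. -/
def σUp (j : ℕ) : ∀ k : ℕ, Φ.D j ⟶ Φ.D (j + k)
  | 0 => 𝟙 _
  | k + 1 => σUp j k ≫ Φ.σ (j + k)

/-- Iterated cotarget `τ^{j+k}_j : D j ⟶ D (j+k)`. -/
def τUp (j : ℕ) : ∀ k : ℕ, Φ.D j ⟶ Φ.D (j + k)
  | 0 => 𝟙 _
  | k + 1 => τUp j k ≫ Φ.τ (j + k)

lemma τUp_σ (j k : ℕ) :
    Φ.τUp j (k + 1) ≫ Φ.σ (j + k + 1) = Φ.τUp j (k + 2) := by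
  show (Φ.τUp j k ≫ Φ.τ (j + k)) ≫ Φ.σ (j + k + 1) =
    (Φ.τUp j k ≫ Φ.τ (j + k)) ≫ Φ.τ (j + k + 1)
  rw [Category.assoc, Category.assoc, Φ.relτ]

lemma σUp_τ (j k : ℕ) :
    Φ.σUp j (k + 1) ≫ Φ.τ (j + k + 1) = Φ.σUp j (k + 2) := by
  show (Φ.σUp j k ≫ Φ.σ (j + k)) ≫ Φ.τ (j + k + 1) =
    (Φ.σUp j k ≫ Φ.σ (j + k)) ≫ Φ.σ (j + k + 1)
  rw [Category.assoc, Category.assoc, Φ.relσ]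

/-- Iterated cosource `D 0 ⟶ D n`. -/
def σZero : ∀ n : ℕ, Φ.D 0 ⟶ Φ.D n
  | 0 => 𝟙 _
  | n + 1 => σZero n ≫ Φ.σ n

/-- Globular parallelism of two morphisms with source a globe `D n`. -/
def Par : ∀ {n : ℕ} {Y : E}, (Φ.D n ⟶ Y) → (Φ.D n ⟶ Y) → Prop
  | 0, _, _, _ => True
  | m + 1, _, f, g => (Φ.σ m ≫ f = Φ.σ m ≫ g) ∧ (Φ.τ m ≫ f = Φ.τ m ≫ g)

end Coglob

/-- Tables of dimensions, indexed by the dimension of the first globe: the table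
`cons j d e T` glues a disk of dimension `j + d + 1` along the dimension `j` onto a
table whose first dimension is `j + e + 1` (so that both dimensions exceed the
gluing dimension, as required for a table of dimensions). -/
inductive GTable : ℕ → Type where
  | single (i : ℕ) : GTable i
  | cons (j d e : ℕ) (T : GTable (j + e + 1)) : GTable (j + d + 1)

/-- Dimension of a table: the greatest dimension appearing in it. -/
def GTable.dim : ∀ {i : ℕ}, GTable i → ℕ
  | _, .single i => i
  | _, .cons j d _ T => max (j + d + 1) T.dim


open CategoryTheory CategoryTheory.Limits

/-- A (Quillen closed) model structure on a category: three classes of morphisms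
(weak equivalences, cofibrations, fibrations) satisfying two-out-of-three,
stability under retracts, the lifting axioms and the factorization axioms.
(Completeness assumptions are imposed separately via `HasFiniteLimits` etc.) -/
structure ModelStr (M : Type u) [Category.{v} M] where
  W : MorphismProperty M
  Cof : MorphismProperty M
  Fib : MorphismProperty M
  w_comp : ∀ {A B C : M} (f : A ⟶ B) (g : B ⟶ C), W f → W g → W (f ≫ g)
  w_cancel_left : ∀ {A B C : M} (f : A ⟶ B) (g : B ⟶ C), W (f ≫ g) → W g → W f
  w_cancel_right : ∀ {A B C : M} (f : A ⟶ B) (g : B ⟶ C), W (f ≫ g) → W f → W g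
  retract_stable : ∀ {A B A' B' : M} (f : A ⟶ B) (g : A' ⟶ B')
    (iA : A ⟶ A') (rA : A' ⟶ A) (iB : B ⟶ B') (rB : B' ⟶ B),
    iA ≫ rA = 𝟙 A → iB ≫ rB = 𝟙 B → iA ≫ g = f ≫ iB → g ≫ rB = rA ≫ f →
    (W g → W f) ∧ (Cof g → Cof f) ∧ (Fib g → Fib f)
  lift_cof_tfib : ∀ {A B X Y : M} (i : A ⟶ B) (p : X ⟶ Y),
    Cof i → Fib p → W p → HasLiftingProperty i p
  lift_tcof_fib : ∀ {A B X Y : M} (i : A ⟶ B) (p : X ⟶ Y),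
    Cof i → W i → Fib p → HasLiftingProperty i p
  fact_cof_tfib : ∀ {A B : M} (f : A ⟶ B),
    ∃ (Z : M) (i : A ⟶ Z) (p : Z ⟶ B), Cof i ∧ Fib p ∧ W p ∧ i ≫ p = f
  fact_tcof_fib : ∀ {A B : M} (f : A ⟶ B),
    ∃ (Z : M) (i : A ⟶ Z) (p : Z ⟶ B), Cof i ∧ W i ∧ Fib p ∧ i ≫ p = f

namespace ModelStr

variable {M : Type u} [Category.{v} M] (ms : ModelStr M)

/-- An object is weakly contractible if `X → *` is a weak equivalence. -/
def WeaklyContractible [HasTerminal M] (X : M) : Prop := ms.W (terminal.from X)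

/-- An object is fibrant if `X → *` is a fibration. -/
def Fibrant [HasTerminal M] (X : M) : Prop := ms.Fib (terminal.from X)

/-- An object is cofibrant if `∅ → X` is a cofibration. -/
def Cofibrant [HasInitial M] (X : M) : Prop := ms.Cof (initial.to X)

end ModelStr

section GlobMC

variable {M : Type u} [Category.{v} M]

/-- The globular sums of a coglobular object in a category with pushouts:
the iterated amalgamated sum associated to a table of dimensions, together with the
inclusion of the first globe. -/
noncomputable def gsumP [HasPushouts M] (Φ : Coglob M) :
    ∀ {i : ℕ}, GTable i → Σ' (S : M), (Φ.D i ⟶ S)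
  | _, .single i => ⟨Φ.D i, 𝟙 _⟩
  | _, .cons j d e T =>
    ⟨pushout (Φ.σUp j (d + 1)) (Φ.τUp j (e + 1) ≫ (gsumP Φ T).2),
      pushout.inl _ _⟩

/-- The spheres `S_{n-1}` of a coglobular object, with the inclusion
`i_n : S_{n-1} ⟶ D_n`: `S_{-1} = ∅` and `S_n = D_n ∐_{S_{n-1}} D_n`,
`i_{n+1} = (τ_{n+1}, σ_{n+1})`. -/
noncomputable def sphereP [HasInitial M] [HasPushouts M] (Φ : Coglob M) :
    ∀ n : ℕ, Σ' (Sob : M) (i : Sob ⟶ Φ.D n), i ≫ Φ.σ n = i ≫ Φ.τ n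
  | 0 => ⟨⊥_ M, initial.to _, initial.hom_ext _ _⟩
  | n + 1 =>
    ⟨pushout (sphereP Φ n).2.1 (sphereP Φ n).2.1,
      pushout.desc (Φ.τ n) (Φ.σ n) (sphereP Φ n).2.2.symm, by
        apply pushout.hom_ext
        · rw [pushout.inl_desc_assoc, pushout.inl_desc_assoc]
          exact Φ.relτ n
        · rw [pushout.inr_desc_assoc, pushout.inr_desc_assoc]
          exact Φ.relσ n⟩

/-- A coglobular object (functor `𝔾 → M`) is cofibrant if each latching morphism
`i_n : S_{n-1} ⟶ D_n` is a cofibration. -/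
def CofibrantCoglob [HasInitial M] [HasPushouts M] (ms : ModelStr M)
    (Φ : Coglob M) : Prop :=
  ∀ n : ℕ, ms.Cof (sphereP Φ n).2.1

/-- A coglobular object is weakly contractible if each globe `D_n` is weakly
contractible. -/
def WeaklyContractibleCoglob [HasTerminal M] (ms : ModelStr M) (Φ : Coglob M) :
    Prop :=
  ∀ n : ℕ, ms.WeaklyContractible (Φ.D n)

end GlobMC

section AuxLemmas

variable {M : Type u} [Category.{v} M]

/-- Retract argument: a morphism with the LLP against all fibrations is a
trivial cofibration. -/
lemma ModelStr.tcof_of_llp (ms : ModelStr M) {A B : M} (f : A ⟶ B)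
    (h : ∀ {X Y : M} (p : X ⟶ Y), ms.Fib p → HasLiftingProperty f p) :
    ms.Cof f ∧ ms.W f := by
  obtain ⟨Z, i, p, hi, hwi, hp, hfact⟩ := ms.fact_tcof_fib f
  haveI := h p hp
  have sq : CommSq i f p (𝟙 B) := ⟨by simp [hfact]⟩
  have hr := ms.retract_stable f i (𝟙 A) (𝟙 A) sq.lift p (by simp)
    sq.fac_right (by simp [sq.fac_left]) (by simp [hfact])
  exact ⟨hr.2.1 hi, hr.1 hwi⟩

/-- Retract argument: a morphism with the LLP against all trivial fibrations is
a cofibration. -/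
lemma ModelStr.cof_of_llp (ms : ModelStr M) {A B : M} (f : A ⟶ B)
    (h : ∀ {X Y : M} (p : X ⟶ Y), ms.Fib p → ms.W p → HasLiftingProperty f p) :
    ms.Cof f := by
  obtain ⟨Z, i, p, hi, hp, hwp, hfact⟩ := ms.fact_cof_tfib f
  haveI := h p hp hwp
  have sq : CommSq i f p (𝟙 B) := ⟨by simp [hfact]⟩
  have hr := ms.retract_stable f i (𝟙 A) (𝟙 A) sq.lift p (by simp)
    sq.fac_right (by simp [sq.fac_left]) (by simp [hfact])
  exact hr.2.1 hi

/-- The LLP against a fixed morphism is stable under pushout (inr case). -/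
lemma llp_pushout_inr [HasPushouts M] {A B C X Y : M}
    (f : A ⟶ B) (u : A ⟶ C) (p : X ⟶ Y) [HasLiftingProperty f p] :
    HasLiftingProperty (pushout.inr f u) p := by
  constructor
  intro top bot sq
  have sq' : CommSq (u ≫ top) f p (pushout.inl f u ≫ bot) := ⟨by
    rw [Category.assoc, sq.w, ← Category.assoc, ← pushout.condition,
      Category.assoc]⟩
  refine ⟨⟨⟨pushout.desc sq'.lift top (by rw [sq'.fac_left]), by rw [pushout.inr_desc], ?_⟩⟩⟩
  apply pushout.hom_ext
  · rw [pushout.inl_desc_assoc, sq'.fac_right]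
  · rw [pushout.inr_desc_assoc, sq.w]

/-- The LLP against a fixed morphism is stable under pushout (inl case). -/
lemma llp_pushout_inl [HasPushouts M] {A B C X Y : M}
    (f : A ⟶ B) (u : A ⟶ C) (p : X ⟶ Y) [HasLiftingProperty u p] :
    HasLiftingProperty (pushout.inl f u) p := by
  constructor
  intro top bot sq
  have sq' : CommSq (f ≫ top) u p (pushout.inr f u ≫ bot) := ⟨by
    rw [Category.assoc, sq.w, ← Category.assoc, pushout.condition,
      Category.assoc]⟩
  refine ⟨⟨⟨pushout.desc top sq'.lift (by rw [sq'.fac_left]), by rw [pushout.inl_desc], ?_⟩⟩⟩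
  apply pushout.hom_ext
  · rw [pushout.inl_desc_assoc, sq.w]
  · rw [pushout.inr_desc_assoc, sq'.fac_right]

variable [HasInitial M] [HasTerminal M] [HasPushouts M]
  (ms : ModelStr M) (Φ : Coglob M)

/-- `σ n` and `τ n` are cofibrations. -/
lemma cof_sigma_tau (hcof : CofibrantCoglob ms Φ) (n : ℕ) :
    ms.Cof (Φ.σ n) ∧ ms.Cof (Φ.τ n) := by
  have hσ : Φ.σ n = pushout.inr (sphereP Φ n).2.1 (sphereP Φ n).2.1 ≫
      (sphereP Φ (n + 1)).2.1 := by
    show _ = _ ≫ pushout.desc (Φ.τ n) (Φ.σ n) _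
    rw [pushout.inr_desc]
  have hτ : Φ.τ n = pushout.inl (sphereP Φ n).2.1 (sphereP Φ n).2.1 ≫
      (sphereP Φ (n + 1)).2.1 := by
    show _ = _ ≫ pushout.desc (Φ.τ n) (Φ.σ n) _
    rw [pushout.inl_desc]
  constructor
  · rw [hσ]
    apply ms.cof_of_llp
    intro X Y p hp hwp
    haveI := ms.lift_cof_tfib (sphereP Φ n).2.1 p (hcof n) hp hwp
    haveI := ms.lift_cof_tfib (sphereP Φ (n + 1)).2.1 p (hcof (n + 1)) hp hwp
    haveI := llp_pushout_inr (sphereP Φ n).2.1 (sphereP Φ n).2.1 p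
    exact @HasLiftingProperty.of_comp_left _ _ _ _ _ _ _ _ _ _ (by assumption) (by assumption)
  · rw [hτ]
    apply ms.cof_of_llp
    intro X Y p hp hwp
    haveI := ms.lift_cof_tfib (sphereP Φ n).2.1 p (hcof n) hp hwp
    haveI := ms.lift_cof_tfib (sphereP Φ (n + 1)).2.1 p (hcof (n + 1)) hp hwp
    haveI := llp_pushout_inl (sphereP Φ n).2.1 (sphereP Φ n).2.1 p
    exact @HasLiftingProperty.of_comp_left _ _ _ _ _ _ _ _ _ _ (by assumption) (by assumption)

/-- `σ n` and `τ n` are weak equivalences. -/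
lemma w_sigma_tau (hwc : WeaklyContractibleCoglob ms Φ) (n : ℕ) :
    ms.W (Φ.σ n) ∧ ms.W (Φ.τ n) :=
  ⟨ms.w_cancel_left _ _ (by rw [terminal.comp_from]; exact hwc n) (hwc (n + 1)),
   ms.w_cancel_left _ _ (by rw [terminal.comp_from]; exact hwc n) (hwc (n + 1))⟩

/-- `σ n` and `τ n` have the LLP against all fibrations. -/
lemma llp_sigma_tau (hcof : CofibrantCoglob ms Φ)
    (hwc : WeaklyContractibleCoglob ms Φ) (n : ℕ)
    {X Y : M} (p : X ⟶ Y) (hp : ms.Fib p) :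
    HasLiftingProperty (Φ.σ n) p ∧ HasLiftingProperty (Φ.τ n) p :=
  ⟨ms.lift_tcof_fib _ p (cof_sigma_tau ms Φ hcof n).1
      (w_sigma_tau ms Φ hwc n).1 hp,
   ms.lift_tcof_fib _ p (cof_sigma_tau ms Φ hcof n).2
      (w_sigma_tau ms Φ hwc n).2 hp⟩

/-- `σUp` and `τUp` have the LLP against all fibrations. -/
lemma llp_up (hcof : CofibrantCoglob ms Φ)
    (hwc : WeaklyContractibleCoglob ms Φ) (j k : ℕ)
    {X Y : M} (p : X ⟶ Y) (hp : ms.Fib p) :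
    HasLiftingProperty (Φ.σUp j k) p ∧ HasLiftingProperty (Φ.τUp j k) p := by
  induction k with
  | zero =>
    exact ⟨inferInstanceAs (HasLiftingProperty (𝟙 (Φ.D j)) p),
      inferInstanceAs (HasLiftingProperty (𝟙 (Φ.D j)) p)⟩
  | succ k ih =>
    haveI := ih.1
    haveI := ih.2
    haveI := (llp_sigma_tau ms Φ hcof hwc (j + k) p hp).1
    haveI := (llp_sigma_tau ms Φ hcof hwc (j + k) p hp).2
    exact ⟨HasLiftingProperty.of_comp_left _ _ _,
      HasLiftingProperty.of_comp_left _ _ _⟩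

/-- Globular sums are weakly contractible. -/
lemma gsum_wc (hcof : CofibrantCoglob ms Φ)
    (hwc : WeaklyContractibleCoglob ms Φ) :
    ∀ {i : ℕ} (T : GTable i), ms.W (terminal.from (gsumP Φ T).1) := by
  intro i T
  induction T with
  | single i => exact hwc i
  | cons j d e T ih =>
    have hinr := (ms.tcof_of_llp
        (pushout.inr (Φ.σUp j (d + 1)) (Φ.τUp j (e + 1) ≫ (gsumP Φ T).2))
        (fun p hp => by
          haveI := (llp_up ms Φ hcof hwc j (d + 1) p hp).1
          exact llp_pushout_inr _ _ p)).2
    refine ms.w_cancel_right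
      (pushout.inr (Φ.σUp j (d + 1)) (Φ.τUp j (e + 1) ≫ (gsumP Φ T).2)) _ ?_
      hinr
    have e : pushout.inr (Φ.σUp j (d + 1)) (Φ.τUp j (e + 1) ≫ (gsumP Φ T).2) ≫
        terminal.from (gsumP Φ (GTable.cons j d e T)).1 =
        terminal.from (gsumP Φ T).1 := Subsingleton.elim _ _
    rw [e]
    exact ih

/-- A globularly parallel pair factors through the sphere. -/
lemma par_factor : ∀ (n : ℕ) {Y : M} (f g : Φ.D n ⟶ Y), Φ.Par f g →
    (sphereP Φ n).2.1 ≫ g = (sphereP Φ n).2.1 ≫ f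
  | 0, _, f, g, _ => initial.hom_ext _ _
  | (m + 1), Y, f, g, h => by
    obtain ⟨h1, h2⟩ := h
    show pushout.desc (Φ.τ m) (Φ.σ m) _ ≫ g =
      pushout.desc (Φ.τ m) (Φ.σ m) _ ≫ f
    apply pushout.hom_ext
    · rw [pushout.inl_desc_assoc, pushout.inl_desc_assoc]
      exact h2.symm
    · rw [pushout.inr_desc_assoc, pushout.inr_desc_assoc]
      exact h1.symm

end AuxLemmas

theorem model_category_globular_extension_contractible {M : Type u}
    [Category.{v} M] [HasFiniteLimits M] [HasFiniteColimits M] [HasPushouts M]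
    (ms : ModelStr M) (Φ : Coglob M)
    (hcof : CofibrantCoglob ms Φ) (hwc : WeaklyContractibleCoglob ms Φ)
    (hfib : ∀ X : M, ms.Fibrant X) :
    ∀ (n : ℕ) {i : ℕ} (T : GTable i), T.dim ≤ n + 1 →
      ∀ f g : Φ.D n ⟶ (gsumP Φ T).1, Φ.Par f g →
        ∃ h : Φ.D (n + 1) ⟶ (gsumP Φ T).1,
          Φ.σ n ≫ h = f ∧ Φ.τ n ≫ h = g := by
  intro n i T _ f g hpar
  have hgf : (sphereP Φ n).2.1 ≫ g = (sphereP Φ n).2.1 ≫ f :=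
    par_factor Φ n f g hpar
  haveI : HasLiftingProperty (sphereP Φ (n + 1)).2.1 (terminal.from (gsumP Φ T).1) :=
    ms.lift_cof_tfib _ _ (hcof (n + 1)) (hfib _) (gsum_wc ms Φ hcof hwc T)
  have sq : CommSq
      (pushout.desc g f hgf : (sphereP Φ (n + 1)).1 ⟶ (gsumP Φ T).1)
      (sphereP Φ (n + 1)).2.1 (terminal.from (gsumP Φ T).1)
      (terminal.from (Φ.D (n + 1))) := ⟨Subsingleton.elim _ _⟩
  haveI : sq.HasLift :=
    (‹HasLiftingProperty (sphereP Φ (n + 1)).2.1 (terminal.from (gsumP Φ T).1)›).sq_hasLift sq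
  have hσc : pushout.inr (sphereP Φ n).2.1 (sphereP Φ n).2.1 ≫
      (sphereP Φ (n + 1)).2.1 = Φ.σ n := by
    show _ ≫ pushout.desc (Φ.τ n) (Φ.σ n) _ = _
    rw [pushout.inr_desc]
  have hτc : pushout.inl (sphereP Φ n).2.1 (sphereP Φ n).2.1 ≫
      (sphereP Φ (n + 1)).2.1 = Φ.τ n := by
    show _ ≫ pushout.desc (Φ.τ n) (Φ.σ n) _ = _
    rw [pushout.inl_desc]
  have h1 : (pushout.inr (sphereP Φ n).2.1 (sphereP Φ n).2.1 ≫
      (sphereP Φ (n + 1)).2.1) ≫ sq.lift = f := by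
    refine (Category.assoc _ _ _).trans ?_
    rw [sq.fac_left, pushout.inr_desc]
  have h2 : (pushout.inl (sphereP Φ n).2.1 (sphereP Φ n).2.1 ≫
      (sphereP Φ (n + 1)).2.1) ≫ sq.lift = g := by
    refine (Category.assoc _ _ _).trans ?_
    rw [sq.fac_left, pushout.inl_desc]
  rw [hσc] at h1
  rw [hτc] at h2
  exact ⟨sq.lift, h1, h2⟩
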